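/- arXiv:1701.04476 — 4 statements merged into one kernel-verified Lean document; each statement's English description precedes it below -/
import Mathlib

section
/- Let J be a finite index set, and for each j ∈ J let Δy_j > 0, h_{2,j} ≥ 0, and β_j, h_{1,j} be real numbers. Let A, A_c be real numbers and set A_1 = min(A, A_c). Assume A = A_1 + Σ_{j∈J} h_{2,j}·Δy_j, and assume that A_1 = A_c implies h_{1,j} = β_j for all j ∈ J. Then (β_j − h_{1,j})·h_{2,j} = 0 for every j ∈ J. -/
/-- No-numerical-flooding property (i): either the lower layer is full or
the upper layer is empty, `(β_j − h_{1,j})·h_{2,j} = 0`. -/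
theorem no_numerical_flooding_i (J : Type*) [Fintype J]
    (Δy h2 β h1 : J → ℝ) (hΔy : ∀ j, 0 < Δy j) (hh2 : ∀ j, 0 ≤ h2 j)
    (A Ac A1 : ℝ) (hA1 : A1 = min A Ac)
    (hmass : A = A1 + ∑ j, h2 j * Δy j)
    (hfull : A1 = Ac → ∀ j, h1 j = β j) :
    ∀ j, (β j - h1 j) * h2 j = 0 := by
  intro j
  by_cases h : A ≤ Ac
  · have hA1A : A1 = A := by rw [hA1, min_eq_left h]
    have hsum : (∑ j, h2 j * Δy j) = 0 := by linarith [hmass, hA1A]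
    have hterm : h2 j * Δy j = 0 := by
      have := (Finset.sum_eq_zero_iff_of_nonneg (fun i _ =>
        mul_nonneg (hh2 i) (hΔy i).le)).mp hsum j (Finset.mem_univ j)
      exact this
    have : h2 j = 0 := by
      rcases mul_eq_zero.mp hterm with h0 | h0
      · exact h0
      · exact absurd h0 (hΔy j).ne'
    simp [this]
  · have : A1 = Ac := by rw [hA1, min_eq_right (le_of_not_ge h)]
    rw [hfull this j]
    ring
end

section
/- Let J be a finite index set, and for each j ∈ J let Δy_j > 0 and h_{2,j} ≥ 0. Let A, A_c, A_1, η_1, η^β be real numbers with A_1 = min(A, A_c) and A = A_1 + Σ_{j∈J} h_{2,j}·Δy_j. Define η_j = η_1 + h_{2,j} for j ∈ J, and assume that A_1 = A_c implies η_1 = η^β. If there exists j* ∈ J with η_{j*} < η^β, then η_j = η_{j*} for all j ∈ J. -/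
/-- No-numerical-flooding property (iii) / discrete consistency: if the free
surface is below the channel wall elevation somewhere in the cell, then it is
laterally flat throughout the cell. -/
theorem no_numerical_flooding_iii (J : Type*) [Fintype J]
    (Δy h2 : J → ℝ) (hΔy : ∀ j, 0 < Δy j) (hh2 : ∀ j, 0 ≤ h2 j)
    (A Ac A1 η1 ηβ : ℝ) (hA1 : A1 = min A Ac)
    (hmass : A = A1 + ∑ j, h2 j * Δy j)
    (η : J → ℝ) (hη : ∀ j, η j = η1 + h2 j)
    (hfull : A1 = Ac → η1 = ηβ)
    (jstar : J) (hjstar : η jstar < ηβ) :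
    ∀ j, η j = η jstar := by
  -- not the full case: A1 = Ac would give η1 = ηβ ≤ η jstar, contradiction
  have hne : A1 ≠ Ac := by
    intro h
    have h1 := hfull h
    have := hη jstar
    have := hh2 jstar
    linarith
  have hAle : A ≤ Ac := by
    by_contra h
    push_neg at h
    have : min A Ac = Ac := min_eq_right h.le
    exact hne (hA1.trans this)
  have hA1A : A1 = A := hA1.trans (min_eq_left hAle)
  have hsum : ∑ j, h2 j * Δy j = 0 := by linarith [hmass, hA1A]
  have hzero : ∀ j, h2 j = 0 := by
    have h0 : ∀ j ∈ Finset.univ (α := J), 0 ≤ h2 j * Δy j :=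
      fun j _ => mul_nonneg (hh2 j) (hΔy j).le
    intro j
    have := (Finset.sum_eq_zero_iff_of_nonneg h0).mp hsum j (Finset.mem_univ j)
    exact (mul_eq_zero.mp this).resolve_right (hΔy j).ne'
  intro j
  rw [hη j, hη jstar, hzero j, hzero jstar]
end

section
/- Let J be a finite nonempty index set with Δy_j > 0 for each j ∈ J and B = Σ_{j∈J} Δy_j. Let A_c, A_1^n be real numbers and h_{2,j}^n ≥ 0 for j ∈ J, and assume the invariant A_1^n = min(A_1^n + Σ_j h_{2,j}^n Δy_j, A_c). Suppose the intermediate solutions are well-balanced: A_1^{n+1*} = A_1^n and h_{2,j}^{n+1*} = h_{2,j}^n for all j. Define A^{n+1} = A_1^{n+1*} + Σ_j h_{2,j}^{n+1*} Δy_j, A_1^{n+1} = min(A^{n+1}, A_c), and h_{2,j}^{n+1} = 0 if A^{n+1} ≤ A_c, while h_{2,j}^{n+1} = h_{2,j}^{n+1*} + (A_1^{n+1*} − A_c)/B if A^{n+1} > A_c. Then A_1^{n+1} = A_1^n, h_{2,j}^{n+1} = h_{2,j}^n for all j ∈ J, and for every function 𝓗 : ℝ → (J → ℝ) the full depths H_j^{n+1}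 = 𝓗(A_1^{n+1})_j + h_{2,j}^{n+1} satisfy H_j^{n+1} = 𝓗(A_1^n)_j + h_{2,j}^n = H_j^n. -/
/-- Well-balanced property (height variables): if the intermediate solvers are
well-balanced then the full update leaves all heights unchanged. -/
theorem well_balanced_heights (J : Type*) [Fintype J] [Nonempty J]
    (Δy : J → ℝ) (hΔy : ∀ j, 0 < Δy j) (B : ℝ) (hB : B = ∑ j, Δy j)
    (Ac A1n : ℝ) (h2n : J → ℝ) (hh2n : ∀ j, 0 ≤ h2n j)
    (hinv : A1n = min (A1n + ∑ j, h2n j * Δy j) Ac)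
    (A1star : ℝ) (h2star : J → ℝ)
    (hA1star : A1star = A1n) (hh2star : ∀ j, h2star j = h2n j)
    (Anew A1new : ℝ) (h2new : J → ℝ)
    (hAnew : Anew = A1star + ∑ j, h2star j * Δy j)
    (hA1new : A1new = min Anew Ac)
    (hh2new : ∀ j, h2new j = if Anew ≤ Ac then 0 else h2star j + (A1star - Ac) / B) :
    A1new = A1n ∧ (∀ j, h2new j = h2n j) ∧
      ∀ 𝓗 : ℝ → (J → ℝ), ∀ j, 𝓗 A1new j + h2new j = 𝓗 A1n j + h2n j := by
  have hsum : ∑ j, h2star j * Δy j = ∑ j, h2n j * Δy j := by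
    exact Finset.sum_congr rfl fun j _ => by rw [hh2star]
  have hAnew' : Anew = A1n + ∑ j, h2n j * Δy j := by rw [hAnew, hA1star, hsum]
  have hinv' : A1n = min Anew Ac := by rw [hAnew']; exact hinv
  have hA1 : A1new = A1n := by rw [hA1new, ← hinv']
  have hh : ∀ j, h2new j = h2n j := by
    intro j
    rw [hh2new]
    by_cases hc : Anew ≤ Ac
    · simp only [if_pos hc]
      -- A1n = min Anew Ac = Anew, so sum = 0, each term 0
      have hA1nA : A1n = Anew := by rw [hinv', min_eq_left hc]
      have hs0 : ∑ j, h2n j * Δy j = 0 := by linarith [hAnew']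
      have hall : ∀ i ∈ Finset.univ, h2n i * Δy i = 0 := by
        have := (Finset.sum_eq_zero_iff_of_nonneg
          (fun i _ => mul_nonneg (hh2n i) (hΔy i).le)).mp hs0
        exact this
      have := hall j (Finset.mem_univ j)
      have := mul_eq_zero.mp this
      rcases this with h | h
      · exact h.symm
      · exact absurd h (hΔy j).ne'
    · simp only [if_neg hc]
      have hA1nAc : A1n = Ac := by
        rw [hinv', min_eq_right (le_of_not_ge hc)]
      rw [hh2star, hA1star, hA1nAc]
      simp
  exact ⟨hA1, hh, fun 𝓗 j => by rw [hA1, hh]⟩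
end

section
/- Fix g > 0, Δt > 0 and a cell area |T| > 0. Let E be a finite edge set; for each e ∈ E let ℓ_e > 0 be the edge length and n_e = (n_{e,x}, n_{e,y}) ∈ ℝ² a vector, with Σ_{e∈E} ℓ_e·n_e = 0. Let the cell carry lake-at-rest data: η₁ ∈ ℝ, h₂ ≥ 0, free surface η = η₁ + h₂, and state Π^n = (h₂, 0, 0) ∈ ℝ³; for each edge e let the neighbour carry η_{1,e} ∈ ℝ and h_{2,e} ≥ 0 with η_{1,e} + h_{2,e} = η. Set η*_e = max(η₁, η_{1,e}) and h̃_e = max(η − η*_e, 0). Let φ be the HLL flux (constructed from F₁(h,q_x,q_y) = (q_x, q_x²/h + (g/2)h², q_x q_y/h), with the conventions above and division by zero equal to zero) with per-edge wave speeds s_{L,e} ≤ 0 ≤ s_{R,e}, s_{L,e} < s_{R,e}. With S^{hrm}(a,b) = (0, (g/2)(a² − b²), 0) and T_{n}^{-1}(a, b, c) = (a, b·n_x − c·n_y, b·n_y + c·n_x), define Π^{n+1*} = Π^n − (Δt/|T|)·Σ_{e∈E} ℓ_e·[ T_{n_e}^{-1} φ((h̃_e, 0, 0), (h̃_e, 0,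 0)) + T_{n_e}^{-1} S^{hrm}(h₂, h̃_e) ]. Then Π^{n+1*} = Π^n. -/
/-- The shallow-water x-directional flux `F₁(h, qx, qy)`. -/
noncomputable def swFlux (g : ℝ) (P : ℝ × ℝ × ℝ) : ℝ × ℝ × ℝ :=
  (P.2.1, P.2.1 ^ 2 / P.1 + g / 2 * P.1 ^ 2, P.2.1 * P.2.2 / P.1)

/-- The HLL numerical flux with wave speeds `sL ≤ sR`. -/
noncomputable def hllFlux (g sL sR : ℝ) (PL PR : ℝ × ℝ × ℝ) : ℝ × ℝ × ℝ :=
  if 0 ≤ sL then swFlux g PL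
  else if 0 < sR then
    (sR - sL)⁻¹ • (sR • swFlux g PL - sL • swFlux g PR + (sL * sR) • (PR - PL))
  else swFlux g PR

/-- The hydrostatic source correction term `S^{hrm}(a, b)`. -/
noncomputable def Shrm (g a b : ℝ) : ℝ × ℝ × ℝ := (0, g / 2 * (a ^ 2 - b ^ 2), 0)

/-- The inverse rotation `T_n⁻¹` associated with the edge normal `n`. -/
def rotInv (n : ℝ × ℝ) (v : ℝ × ℝ × ℝ) : ℝ × ℝ × ℝ :=
  (v.1, v.2.1 * n.1 - v.2.2 * n.2, v.2.1 * n.2 + v.2.2 * n.1)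

/-- The upper-layer apparent-topography hydrostatic reconstruction scheme is
well-balanced with respect to lake at rest. -/
theorem upper_layer_well_balanced (g Δt T : ℝ) (hg : 0 < g) (hΔt : 0 < Δt)
    (hT : 0 < T) (E : Type*) [Fintype E]
    (ℓ : E → ℝ) (n : E → ℝ × ℝ) (hℓ : ∀ e, 0 < ℓ e)
    (hclosed : ∑ e, ℓ e • n e = (0 : ℝ × ℝ))
    (η1 h2 : ℝ) (hh2 : 0 ≤ h2)
    (η1e h2e : E → ℝ) (hh2e : ∀ e, 0 ≤ h2e e)
    (η : ℝ) (hη : η = η1 + h2) (hlake : ∀ e, η1e e + h2e e = η)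
    (ηstar htilde : E → ℝ)
    (hηstar : ∀ e, ηstar e = max η1 (η1e e))
    (hhtilde : ∀ e, htilde e = max (η - ηstar e) 0)
    (sL sR : E → ℝ) (hsL : ∀ e, sL e ≤ 0) (hsR : ∀ e, 0 ≤ sR e)
    (hss : ∀ e, sL e < sR e)
    (Pn Pnew : ℝ × ℝ × ℝ) (hPn : Pn = (h2, 0, 0))
    (hPnew : Pnew = Pn - (Δt / T) •
      ∑ e, ℓ e • (rotInv (n e)
          (hllFlux g (sL e) (sR e) (htilde e, 0, 0) (htilde e, 0, 0))
        + rotInv (n e) (Shrm g h2 (htilde e)))) :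
    Pnew = Pn := by
  set c : ℝ := g / 2 * h2 ^ 2 with hc
  have hll : ∀ e, hllFlux g (sL e) (sR e) (htilde e, 0, 0) (htilde e, 0, 0)
      = ((0 : ℝ), g / 2 * (htilde e) ^ 2, 0) := by
    intro e
    have hne : sR e - sL e ≠ 0 := sub_ne_zero.mpr (hss e).ne'
    have hsw : swFlux g ((htilde e : ℝ), 0, 0) = ((0 : ℝ), g / 2 * (htilde e) ^ 2, 0) := by
      simp [swFlux]
    unfold hllFlux
    rcases le_or_gt 0 (sL e) with h | h
    · rw [if_pos h, hsw]
    · rw [if_neg (not_le.mpr h)]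
      rcases (hsR e).lt_or_eq with h2' | h2'
      · rw [if_pos h2']
        rw [sub_self, smul_zero, add_zero, ← sub_smul, smul_smul,
          inv_mul_cancel₀ hne, one_smul, hsw]
      · rw [if_neg (by linarith), hsw]
  have key : ∀ e, ℓ e • (rotInv (n e)
        (hllFlux g (sL e) (sR e) (htilde e, 0, 0) (htilde e, 0, 0))
      + rotInv (n e) (Shrm g h2 (htilde e)))
      = ((0 : ℝ), c * (ℓ e • n e).1, c * (ℓ e • n e).2) := by
    intro e
    rw [hll e]
    simp only [rotInv, Shrm, Prod.smul_def, Prod.mk_add_mk, Prod.mk.injEq,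
      smul_eq_mul, Prod.fst_add, Prod.snd_add]
    refine ⟨by ring, by ring, by ring⟩
  have hsum : ∑ e, ℓ e • (rotInv (n e)
        (hllFlux g (sL e) (sR e) (htilde e, 0, 0) (htilde e, 0, 0))
      + rotInv (n e) (Shrm g h2 (htilde e))) = (0 : ℝ × ℝ × ℝ) := by
    rw [Finset.sum_congr rfl (fun e _ => key e)]
    have h1 : (∑ e, ℓ e • n e).1 = 0 := by rw [hclosed]; rfl
    have h2' : (∑ e, ℓ e • n e).2 = 0 := by rw [hclosed]; rfl
    rw [Prod.fst_sum] at h1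
    rw [Prod.snd_sum] at h2'
    have : (∑ e, ((0 : ℝ), c * (ℓ e • n e).1, c * (ℓ e • n e).2))
        = ((0 : ℝ), c * ∑ e, (ℓ e • n e).1, c * ∑ e, (ℓ e • n e).2) := by
      rw [Prod.ext_iff, Prod.ext_iff, Prod.fst_sum, Prod.snd_sum, Prod.fst_sum,
        Prod.snd_sum, Finset.mul_sum, Finset.mul_sum]
      simp
    rw [this, h1, h2']
    simp [Prod.ext_iff]
  rw [hPnew, hsum, smul_zero, sub_zero]
end
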